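/- For d ≥ 0, a quantifier-free Boolean formula φ over disjoint blocks x₁,…,x_{2d+1}, and the canonical mechanism M(φ, x₁,…,x_{2d+1}): if the closed formula ∀x₁ ∃x₂ ∀x₃ … ∀x_{2d+1} φ is false, then there exists an action profile s with γ false at s such that no agent is d'-order responsible under s for any d' ≤ d. -/

import Mathlib

/-- A sequential decision-making mechanism has `n` agents acting in order; agent `i`
controls an action block of type `A i` (the Boolean valuations of its variable block),
and the deontic constraint is a predicate `γ` on action profiles.
`Resp γ d i s` says that agent `i` is `d`-order responsible under profile `s`:
`R^d_i = Gap_{d-1} ∧ ∃v_i ∀v_{i+1} … ∀v_n ¬Gap_{d-1}`,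
where `Gap_{d-1} = ¬γ ∧ ⋀_{j≤n} ⋀_{1≤e<d} ¬R^e_j`. -/
def Resp {n : ℕ} {A : Fin n → Type} (γ : (∀ i, A i) → Prop) :
    (d : ℕ) → Fin n → (∀ i, A i) → Prop
  | 0, _, _ => False
  | d+1, i, s =>
    (¬ γ s ∧ ∀ e ≤ d, ∀ j, ¬ Resp γ e j s) ∧
    ∃ t : ∀ i', A i', (∀ j, j < i → t j = s j) ∧
      ∀ u : ∀ i', A i', (∀ j, j ≤ i → u j = t j) →
        ¬ (¬ γ u ∧ ∀ e ≤ d, ∀ j, ¬ Resp γ e j u)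
termination_by d => d
decreasing_by all_goals omega

/-- A mechanism is `d`-gap-free if for every profile violating the deontic constraint
there are `d' ≤ d` and an agent who is `d'`-order responsible. -/
def GapFree {n : ℕ} {A : Fin n → Type} (γ : (∀ i, A i) → Prop) (d : ℕ) : Prop :=
  ∀ s, ¬ γ s → ∃ d' ≤ d, ∃ i, Resp γ d' i s

/-- `AltTrue n A γ k s` : alternating quantification over the remaining blocks
`k, k+1, …, n-1` (a `∀` over block `k` when `k` is even in 0-based counting,
i.e. blocks 1,3,5,… in 1-based counting, and `∃` when `k` is odd), of the
statement that `γ` holds at the resulting profile.  Reading `∀` as Devil's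
moves and `∃` as Moralist's moves, `AltTrue n A γ k s` says that the game node
reached after the first `k` moves recorded in `s` is winning for Moralist. -/
def AltTrue (n : ℕ) (A : Fin n → Type) (γ : (∀ i, A i) → Prop) :
    (k : ℕ) → (∀ i, A i) → Prop :=
  fun k s =>
    if h : k < n then
      if k % 2 = 0 then
        ∀ a : A ⟨k, h⟩, AltTrue n A γ (k+1) (Function.update s ⟨k, h⟩ a)
      else
        ∃ a : A ⟨k, h⟩, AltTrue n A γ (k+1) (Function.update s ⟨k, h⟩ a)
    else γ s
termination_by k => n - k
decreasing_by all_goals omega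

/-- Action block of agent `i` in the canonical mechanism `M(φ, x₁,…,x_{2d+1})`:
the original block `X i`, extended by one fresh Boolean variable `q` exactly when
`i` is even in 1-based counting (odd in 0-based counting); for the other agents the
extension is the empty block `Fin 0 → Bool`. -/
def CanA {d : ℕ} (X : Fin (2*d+1) → Type) (i : Fin (2*d+1)) : Type :=
  X i × (Fin ((i : ℕ) % 2) → Bool)

/-- Deontic constraint of the canonical mechanism: `γ = φ ∧ ⋀_{1≤i≤d} q_{2i}`. -/
def canGamma {d : ℕ} (X : Fin (2*d+1) → Type) (φ : (∀ i, X i) → Prop)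
    (s : ∀ i, CanA X i) : Prop :=
  φ (fun i => (s i).1) ∧ ∀ i, ∀ j, (s i).2 j = true

/-- `s` conforms to the Devil strategy `σ`: every odd-numbered (1-based; even
0-based) block of `s` is the one prescribed by `σ`. -/
def Conform {n : ℕ} {A : Fin n → Type}
    (σ : ∀ i : Fin n, (∀ j, A j) → A i) (s : ∀ i, A i) : Prop :=
  ∀ i : Fin n, (i : ℕ) % 2 = 0 → s i = σ i s

open Classical in
/-- The degree of immorality `‖s‖`: one sin for each fresh variable `q_{2i}`
that is false under `s`, plus one sin if `s` conforms to the Devil strategy `σ`. -/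
noncomputable def immorality {d : ℕ} {X : Fin (2*d+1) → Type}
    (σ : ∀ i : Fin (2*d+1), (∀ j, CanA X j) → CanA X i)
    (s : ∀ i, CanA X i) : ℕ :=
  (Finset.univ.filter (fun i : Fin (2*d+1) => ∃ j, (s i).2 j = false)).card
  + (if Conform σ s then 1 else 0)

open Classical in
lemma devil_aux {n : ℕ} {A : Fin n → Type} [∀ i, Nonempty (A i)] {φ : (∀ i, A i) → Prop}
    (m : ℕ) : ∀ k (s : ∀ i, A i), n - k ≤ m → ¬ AltTrue n A φ k s →
    ∃ δ : ∀ i : Fin n, (∀ j, A j) → A i,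
      (∀ i : Fin n, ∀ x y : ∀ j, A j, (∀ j : Fin n, (j:ℕ) < (i:ℕ) → x j = y j) → δ i x = δ i y) ∧
      ∀ x : ∀ j, A j, (∀ j : Fin n, (j:ℕ) < k → x j = s j) →
        (∀ i : Fin n, k ≤ (i:ℕ) → (i:ℕ) % 2 = 0 → x i = δ i x) → ¬ φ x := by
  induction m with
  | zero =>
    intro k s hm H
    rw [AltTrue, dif_neg (by omega)] at H
    refine ⟨fun i _ => Classical.arbitrary (A i), fun _ _ _ _ => rfl, fun x hx _ => ?_⟩
    have : x = s := funext fun j => hx j (by omega)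
    rw [this]; exact H
  | succ m ih =>
    intro k s hm H
    by_cases h : k < n
    · rw [AltTrue, dif_pos h] at H
      by_cases hpar : k % 2 = 0
      · rw [if_pos hpar] at H
        obtain ⟨a, ha⟩ := not_forall.mp H
        obtain ⟨δ', hpd', hc'⟩ := ih (k+1) (Function.update s ⟨k, h⟩ a) (by omega) ha
        refine ⟨Function.update δ' ⟨k, h⟩ (fun _ => a), ?_, ?_⟩
        · intro i x y hxy
          by_cases hik : i = ⟨k, h⟩
          · subst hik; rw [Function.update_self]
          · rw [Function.update_of_ne hik]; exact hpd' i x y hxy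
        · intro x hlow hfol
          have hxk : x ⟨k, h⟩ = a := by
            have := hfol ⟨k, h⟩ (le_refl k) hpar
            rwa [Function.update_self] at this
          refine hc' x ?_ ?_
          · intro j hj
            rcases Nat.lt_succ_iff_lt_or_eq.mp hj with hj' | hj'
            · rw [hlow j hj', Function.update_of_ne (by simp [Fin.ext_iff]; omega)]
            · have : j = ⟨k, h⟩ := Fin.ext hj'
              subst this; rw [hxk, Function.update_self]
          · intro i hik hieven
            have := hfol i (by omega) hieven
            rwa [Function.update_of_ne (by simp [Fin.ext_iff]; omega)] at this
      · rw [if_neg hpar] at H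
        push_neg at H
        have IH : ∀ a : A ⟨k, h⟩, ∃ δ', _ := fun a => ih (k+1) (Function.update s ⟨k, h⟩ a) (by omega) (H a)
        choose D hpd hc using IH
        refine ⟨fun i x => if hik : k < (i:ℕ) then D (x ⟨k, h⟩) i x else Classical.arbitrary (A i), ?_, ?_⟩
        · intro i x y hxy
          beta_reduce
          by_cases hik : k < (i:ℕ)
          · rw [dif_pos hik, dif_pos hik]
            have hxk : x ⟨k, h⟩ = y ⟨k, h⟩ := hxy ⟨k, h⟩ hik
            rw [hxk]
            exact hpd (y ⟨k, h⟩) i x y hxy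
          · rw [dif_neg hik, dif_neg hik]
        · intro x hlow hfol
          refine hc (x ⟨k, h⟩) x ?_ ?_
          · intro j hj
            rcases Nat.lt_succ_iff_lt_or_eq.mp hj with hj' | hj'
            · rw [hlow j hj', Function.update_of_ne (by simp [Fin.ext_iff]; omega)]
            · have : j = ⟨k, h⟩ := Fin.ext hj'
              subst this; rw [Function.update_self]
          · intro i hik hieven
            have := hfol i (by omega) hieven
            beta_reduce at this
            rwa [dif_pos (show k < (i:ℕ) by omega)] at this
    · exact ih k s (by omega) H


noncomputable def fillSeq {n : ℕ} {A : Fin n → Type}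
    (σ : ∀ i : Fin n, (∀ j, A j) → A i) (b : ∀ j, A j) (c : ℕ) : ℕ → ∀ j, A j
  | 0 => b
  | m+1 =>
    if hm : m < n ∧ c < m ∧ m % 2 = 0 then
      Function.update (fillSeq σ b c m) ⟨m, hm.1⟩ (σ ⟨m, hm.1⟩ (fillSeq σ b c m))
    else fillSeq σ b c m

lemma fillSeq_stab {n : ℕ} {A : Fin n → Type}
    (σ : ∀ i : Fin n, (∀ j, A j) → A i) (b : ∀ j, A j) (c : ℕ) :
    ∀ (p m : ℕ) (j : Fin n), (j:ℕ) < m → fillSeq σ b c (m+p) j = fillSeq σ b c m j := by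
  intro p
  induction p with
  | zero => intro m j _; rfl
  | succ p ih =>
    intro m j hj
    show fillSeq σ b c ((m+p)+1) j = _
    rw [fillSeq]
    split
    · next hm =>
      rw [Function.update_of_ne (by simp [Fin.ext_iff]; omega)]
      exact ih m j hj
    · exact ih m j hj

lemma fillSeq_low {n : ℕ} {A : Fin n → Type}
    (σ : ∀ i : Fin n, (∀ j, A j) → A i) (b : ∀ j, A j) (c : ℕ) :
    ∀ (m : ℕ) (j : Fin n), ((j:ℕ) ≤ c ∨ (j:ℕ) % 2 = 1) → fillSeq σ b c m j = b j := by
  intro m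
  induction m with
  | zero => intro j _; rfl
  | succ m ih =>
    intro j hj
    rw [fillSeq]
    split
    · next hm =>
      rw [Function.update_of_ne (by simp [Fin.ext_iff]; omega)]
      exact ih j hj
    · exact ih j hj

lemma fill_exists {n : ℕ} {A : Fin n → Type}
    (σ : ∀ i : Fin n, (∀ j, A j) → A i)
    (hσ : ∀ i : Fin n, (i:ℕ) % 2 = 0 → ∀ x y : ∀ j, A j,
      (∀ j : Fin n, (j:ℕ) < (i:ℕ) → x j = y j) → σ i x = σ i y)
    (t r : ∀ j, A j) (c : ℕ) :
    ∃ u : ∀ j, A j,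
      (∀ j : Fin n, (j:ℕ) ≤ c → u j = t j) ∧
      (∀ j : Fin n, c < (j:ℕ) → (j:ℕ) % 2 = 1 → u j = r j) ∧
      (∀ j : Fin n, c < (j:ℕ) → (j:ℕ) % 2 = 0 → u j = σ j u) := by
  classical
  set b : ∀ j, A j := fun j => if (j:ℕ) ≤ c then t j else r j with hb
  refine ⟨fillSeq σ b c n, ?_, ?_, ?_⟩
  · intro j hj
    rw [fillSeq_low σ b c n j (Or.inl hj), hb]
    simp [hj]
  · intro j hj hodd
    rw [fillSeq_low σ b c n j (Or.inr hodd), hb]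
    simp [show ¬ (j:ℕ) ≤ c by omega]
  · intro j hj heven
    have hjn : (j:ℕ) < n := j.isLt
    have h1 : fillSeq σ b c n j = fillSeq σ b c ((j:ℕ)+1) j := by
      have := fillSeq_stab σ b c (n - ((j:ℕ)+1)) ((j:ℕ)+1) j (by omega)
      rw [show ((j:ℕ)+1) + (n - ((j:ℕ)+1)) = n from by omega] at this
      exact this
    have h2 : fillSeq σ b c ((j:ℕ)+1) j = σ j (fillSeq σ b c (j:ℕ)) := by
      rw [fillSeq, dif_pos ⟨hjn, hj, heven⟩]
      have hje : (⟨(j:ℕ), hjn⟩ : Fin n) = j := by simp [Fin.ext_iff]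
      rw [hje]
      exact Function.update_self j _ _
    rw [h1, h2]
    refine hσ j heven _ _ ?_
    intro j' hj'
    have := fillSeq_stab σ b c (n - (j:ℕ)) (j:ℕ) j' hj'
    rw [show (j:ℕ) + (n - (j:ℕ)) = n from by omega] at this
    exact this.symm


section CanonAux

variable {d : ℕ} {X : Fin (2*d+1) → Type} {φ : (∀ i, X i) → Prop}

/-- Lift a Devil strategy on the original blocks to the canonical mechanism. -/
def canSigma (δ : ∀ i : Fin (2*d+1), (∀ j, X j) → X i) :
    ∀ i : Fin (2*d+1), (∀ j, CanA X j) → CanA X i :=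
  fun i s => (δ i (fun j => (s j).1), (s i).2)

lemma canSigma_pd (δ : ∀ i : Fin (2*d+1), (∀ j, X j) → X i)
    (hpd : ∀ i : Fin (2*d+1), ∀ x y : ∀ j, X j,
      (∀ j : Fin (2*d+1), (j:ℕ) < (i:ℕ) → x j = y j) → δ i x = δ i y) :
    ∀ i : Fin (2*d+1), (i:ℕ) % 2 = 0 → ∀ x y : ∀ j, CanA X j,
      (∀ j : Fin (2*d+1), (j:ℕ) < (i:ℕ) → x j = y j) →
      canSigma δ i x = canSigma δ i y := by
  intro i hie x y hxy
  have hfst : δ i (fun j => (x j).1) = δ i (fun j => (y j).1) :=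
    hpd i _ _ (fun j hj => by rw [hxy j hj])
  have hsnd : (x i).2 = (y i).2 := by
    funext jj
    exact absurd jj.isLt (by omega)
  simp only [canSigma, hfst, hsnd]
  rfl

lemma conform_not (δ : ∀ i : Fin (2*d+1), (∀ j, X j) → X i)
    (hwin : ∀ x : ∀ j, X j, (∀ i : Fin (2*d+1), (i:ℕ) % 2 = 0 → x i = δ i x) → ¬ φ x)
    (s : ∀ j, CanA X j) (h : Conform (canSigma δ) s) : ¬ canGamma X φ s := by
  rintro ⟨hφ, -⟩
  refine hwin (fun j => (s j).1) ?_ hφ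
  intro i hie
  exact congrArg Prod.fst (h i hie)

lemma imm_pos (δ : ∀ i : Fin (2*d+1), (∀ j, X j) → X i)
    (hwin : ∀ x : ∀ j, X j, (∀ i : Fin (2*d+1), (i:ℕ) % 2 = 0 → x i = δ i x) → ¬ φ x)
    (s : ∀ j, CanA X j) (h : 1 ≤ immorality (canSigma δ) s) : ¬ canGamma X φ s := by
  by_cases hc : Conform (canSigma δ) s
  · exact conform_not δ hwin s hc
  · rintro ⟨-, hq⟩
    rw [immorality, if_neg hc] at h
    have h1 : 0 < (Finset.univ.filter
        (fun i : Fin (2*d+1) => ∃ j, (s i).2 j = false)).card := by omega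
    obtain ⟨i, hi⟩ := Finset.card_pos.mp h1
    rw [Finset.mem_filter] at hi
    obtain ⟨-, jj, hjj⟩ := hi
    rw [hq i jj] at hjj
    simp at hjj

lemma count_lemma (δ : ∀ i : Fin (2*d+1), (∀ j, X j) → X i)
    (hpd : ∀ i : Fin (2*d+1), ∀ x y : ∀ j, X j,
      (∀ j : Fin (2*d+1), (j:ℕ) < (i:ℕ) → x j = y j) → δ i x = δ i y)
    (s t : ∀ j, CanA X j) (i : Fin (2*d+1)) (ht : ∀ j, j < i → t j = s j) :
    ∃ u : ∀ j, CanA X j, (∀ j, j ≤ i → u j = t j) ∧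
      immorality (canSigma δ) s ≤ immorality (canSigma δ) u + 1 := by
  classical
  obtain ⟨u, h1, h2, h3⟩ := fill_exists (canSigma δ) (canSigma_pd δ hpd) t
    (fun j => ((t j).1, fun _ => false)) (i : ℕ)
  refine ⟨u, fun j hj => h1 j (Fin.le_def.mp hj), ?_⟩
  set S := Finset.univ.filter (fun j : Fin (2*d+1) => ∃ jj, (s j).2 jj = false) with hS
  set U := Finset.univ.filter (fun j : Fin (2*d+1) => ∃ jj, (u j).2 jj = false) with hU
  have key : ∀ j : Fin (2*d+1), j ∈ S → j ≠ i → j ∈ U := by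
    intro j hj hji
    rw [hS, Finset.mem_filter] at hj
    obtain ⟨-, jj, hjj⟩ := hj
    rw [hU, Finset.mem_filter]
    refine ⟨Finset.mem_univ _, ?_⟩
    rcases lt_trichotomy (j:ℕ) (i:ℕ) with hlt | heq | hgt
    · refine ⟨jj, ?_⟩
      rw [h1 j (by omega), ht j (Fin.lt_def.mpr hlt)]
      exact hjj
    · exact absurd (Fin.ext heq) hji
    · have hodd : (j:ℕ) % 2 = 1 := by have := jj.isLt; omega
      refine ⟨jj, ?_⟩
      rw [h2 j hgt hodd]
  have hsub : S ⊆ insert i U := by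
    intro j hj
    by_cases hji : j = i
    · subst hji; exact Finset.mem_insert_self _ _
    · exact Finset.mem_insert_of_mem (key j hj hji)
  have hcard : S.card ≤ U.card + 1 :=
    le_trans (Finset.card_le_card hsub) (Finset.card_insert_le _ _)
  by_cases hcs : Conform (canSigma δ) s
  · by_cases hie : (i:ℕ) % 2 = 0
    · -- i even: i carries no fresh variable, so S ⊆ U
      have hsub2 : S ⊆ U := by
        intro j hj
        by_cases hji : j = i
        · subst hji
          rw [hS, Finset.mem_filter] at hj
          obtain ⟨-, jj, -⟩ := hj
          exact absurd jj.isLt (by omega)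
        · exact key j hj hji
      have : S.card ≤ U.card := Finset.card_le_card hsub2
      rw [immorality, immorality, if_pos hcs, ← hS, ← hU]
      split <;> omega
    · -- i odd: conformity is preserved
      have hcu : Conform (canSigma δ) u := by
        intro j hje
        by_cases hlt : (j:ℕ) < (i:ℕ)
        · have e1 : u j = s j := by
            rw [h1 j (by omega)]; exact ht j (Fin.lt_def.mpr hlt)
          rw [e1, hcs j hje]
          refine canSigma_pd δ hpd j hje s u ?_
          intro j' hj'
          rw [h1 j' (by omega)]
          exact (ht j' (Fin.lt_def.mpr (by omega))).symm
        · have hgt : (i:ℕ) < (j:ℕ) := by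
            rcases Nat.lt_or_ge (i:ℕ) (j:ℕ) with h | h
            · exact h
            · exfalso; have : (j:ℕ) = (i:ℕ) := by omega
              rw [this] at hje; omega
          exact h3 j hgt hje
      rw [immorality, immorality, if_pos hcs, if_pos hcu, ← hS, ← hU]
      omega
  · rw [immorality, immorality, if_neg hcs, ← hS, ← hU]
    split <;> omega

lemma no_resp (δ : ∀ i : Fin (2*d+1), (∀ j, X j) → X i)
    (hpd : ∀ i : Fin (2*d+1), ∀ x y : ∀ j, X j,
      (∀ j : Fin (2*d+1), (j:ℕ) < (i:ℕ) → x j = y j) → δ i x = δ i y)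
    (hwin : ∀ x : ∀ j, X j, (∀ i : Fin (2*d+1), (i:ℕ) % 2 = 0 → x i = δ i x) → ¬ φ x) :
    ∀ e (s : ∀ j, CanA X j) (i : Fin (2*d+1)),
      e + 2 ≤ immorality (canSigma δ) s → ¬ Resp (canGamma X φ) (e+1) i s := by
  intro e
  induction e using Nat.strong_induction_on with
  | _ e ih =>
    intro s i him hresp
    rw [Resp] at hresp
    obtain ⟨-, t, ht, hall⟩ := hresp
    obtain ⟨u, hu, hc⟩ := count_lemma δ hpd s t i ht
    refine hall u hu ⟨?_, ?_⟩
    · exact imm_pos δ hwin u (by omega)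
    · intro e' he' j hr
      match e', hr with
      | 0, hr => simp [Resp] at hr
      | e''+1, hr => exact ih e'' (by omega) u j (by omega) hr

end CanonAux

/-- If the closed formula `∀x₁ ∃x₂ ∀x₃ … ∀x_{2d+1} φ` is false, then the
canonical mechanism has a profile `s` violating the deontic constraint under
which no agent is `d'`-order responsible for any `d' ≤ d`. -/
theorem qbf_false_imp_gap {d : ℕ} (X : Fin (2*d+1) → Type)
    [∀ i, Nonempty (X i)] (φ : (∀ i, X i) → Prop)
    (hQ : ¬ ∀ s₀ : ∀ i, X i, AltTrue (2*d+1) X φ 0 s₀) :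
    ∃ s : ∀ i, CanA X i, ¬ canGamma X φ s ∧
      ∀ d' ≤ d, ∀ i, ¬ Resp (canGamma X φ) d' i s := by
  classical
  obtain ⟨s₀, h0⟩ := not_forall.mp hQ
  obtain ⟨δ, hpd, hcorr⟩ := devil_aux (2*d+1) 0 s₀ (by omega) h0
  have hwin : ∀ x : ∀ j, X j,
      (∀ i : Fin (2*d+1), (i:ℕ) % 2 = 0 → x i = δ i x) → ¬ φ x := by
    intro x hx
    exact hcorr x (fun j hj => absurd hj (by omega)) (fun i _ hie => hx i hie)
  -- base profile: all fresh variables false, arbitrary original values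
  set z : ∀ j, CanA X j := fun j => (Classical.arbitrary (X j), fun _ => false) with hz
  obtain ⟨u, h1, h2, h3⟩ := fill_exists (canSigma δ) (canSigma_pd δ hpd)
    (fun j => canSigma δ j z) (fun j => (Classical.arbitrary (X j), fun _ => false)) 0
  have hconf : Conform (canSigma δ) u := by
    intro i hie
    by_cases hi0 : (i:ℕ) = 0
    · rw [h1 i (by omega)]
      refine canSigma_pd δ hpd i hie z u ?_
      intro j hj
      exact absurd hj (by omega)
    · exact h3 i (by omega) hie
  have hcard : d ≤ (Finset.univ.filter
      (fun i : Fin (2*d+1) => ∃ j, (u i).2 j = false)).card := by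
    have hmem : ∀ k : Fin d, (⟨2*(k:ℕ)+1, by omega⟩ : Fin (2*d+1)) ∈
        Finset.univ.filter (fun i : Fin (2*d+1) => ∃ j, (u i).2 j = false) := by
      intro k
      rw [Finset.mem_filter]
      refine ⟨Finset.mem_univ _, ⟨0, by show 0 < (2*(k:ℕ)+1) % 2; omega⟩, ?_⟩
      rw [h2 ⟨2*(k:ℕ)+1, by omega⟩ (by show 0 < 2*(k:ℕ)+1; omega)
        (by show (2*(k:ℕ)+1) % 2 = 1; omega)]
    calc d = (Finset.univ : Finset (Fin d)).card := by simp
    _ ≤ _ := by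
        apply Finset.card_le_card_of_injOn
          (fun k : Fin d => (⟨2*(k:ℕ)+1, by omega⟩ : Fin (2*d+1)))
        · exact fun k _ => hmem k
        · intro a _ b _ h
          simp only [Fin.mk.injEq] at h
          exact Fin.ext (by omega)
  have himm : d + 1 ≤ immorality (canSigma δ) u := by
    rw [immorality, if_pos hconf]
    omega
  refine ⟨u, imm_pos δ hwin u (by omega), ?_⟩
  intro d' hd' i
  match d' with
  | 0 => simp [Resp]
  | e+1 => exact no_resp δ hpd hwin e u i (by omega)
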